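/- Let C be an algebraically ordered compact cone and let f, g ∈ Lsc(C). Consider the statements: (i) there exists g' ∈ Lsc(C) with f ≤ g' ⊴ g; (ii) the topological closure of set(f) = {λ ∈ C : f(λ) > 1} is contained in set(g) = {λ ∈ C : g(λ) > 1}; (iii) f is non-sequentially way-below g in Lsc(C), that is, whenever (h_α) is an increasing net in Lsc(C) whose pointwise supremum h satisfies g ≤ h, there exists α with f ≤ h_α; (iv) f is sequentially way-below g in Lsc(C), that is, whenever (h_n) is an increasing sequence in Lsc(C) whose pointwise supremum h satisfies g ≤ h, there exists n with f ≤ h_n. Then (i) implies (ii), (ii) implies (iii), and (iii) implies (iv); moreover, if g ∈ LL(C), then (iv) implies (i), so all four statements are equivalent. -/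

import Mathlib

open scoped ENNReal

universe u v

section ConePreamble

variable {C : Type u} [AddCommMonoid C] [TopologicalSpace C]

/-- An algebraically ordered compact cone: a commutative monoid with a compatible
scalar multiplication `sm` by `(0,∞)`, jointly continuous operations, and an
antisymmetric algebraic pre-order. Compactness and Hausdorffness are carried
by the instance hypotheses. -/
structure IsAOCompactCone (C : Type u) [AddCommMonoid C] [TopologicalSpace C]
    [CompactSpace C] [T2Space C] (sm : ℝ → C → C) : Prop where
  continuous_add : Continuous fun p : C × C => p.1 + p.2
  continuous_smul : ContinuousOn (fun p : ℝ × C => sm p.1 p.2)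
    (Set.Ioi (0 : ℝ) ×ˢ (Set.univ : Set C))
  smul_add : ∀ t : ℝ, 0 < t → ∀ x y : C, sm t (x + y) = sm t x + sm t y
  add_smul : ∀ s t : ℝ, 0 < s → 0 < t → ∀ x : C, sm (s + t) x = sm s x + sm t x
  mul_smul : ∀ s t : ℝ, 0 < s → 0 < t → ∀ x : C, sm (s * t) x = sm s (sm t x)
  one_smul : ∀ x : C, sm 1 x = x
  smul_zero : ∀ t : ℝ, 0 < t → sm t 0 = 0
  alg_antisymm : ∀ x y : C, (∃ v : C, x + v = y) → (∃ w : C, y + w = x) → x = y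

/-- Membership in `Lsc(C)`: a lower semicontinuous, additive, `(0,∞)`-homogeneous,
zero-preserving map `C → [0,∞]`. -/
structure IsLscFun (sm : ℝ → C → C) (h : C → ℝ≥0∞) : Prop where
  lsc : LowerSemicontinuous h
  map_zero : h 0 = 0
  map_add : ∀ x y : C, h (x + y) = h x + h y
  map_smul : ∀ t : ℝ, 0 < t → ∀ x : C, h (sm t x) = ENNReal.ofReal t * h x

/-- The relation `f ⊴ g`. -/
def TriRel (f g : C → ℝ≥0∞) : Prop :=
  ∃ ε : ℝ, 0 < ε ∧ (∀ x : C, f x ≤ ENNReal.ofReal (1 - ε) * g x) ∧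
    ∀ x : C, g x < ⊤ → ContinuousAt f x

/-- Membership in `LL(C)`: pointwise suprema of `⊴`-increasing sequences in `Lsc(C)`. -/
def MemLL (sm : ℝ → C → C) (f : C → ℝ≥0∞) : Prop :=
  ∃ g : ℕ → C → ℝ≥0∞, (∀ n, IsLscFun sm (g n)) ∧ (∀ n, TriRel (g n) (g (n + 1))) ∧
    ∀ x : C, f x = ⨆ n, g n x

end ConePreamble

/-- Implications between the four characterizations of the way-below relation on
`Lsc(C)` for an algebraically ordered compact cone `C`; all four are equivalent
when `g ∈ LL(C)`. -/
theorem stmt_16 {C : Type u} [AddCommMonoid C] [TopologicalSpace C]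
    [CompactSpace C] [T2Space C] (sm : ℝ → C → C)
    (hC : IsAOCompactCone C sm)
    (f g : C → ℝ≥0∞) (hf : IsLscFun sm f) (hg : IsLscFun sm g) :
    (((∃ g' : C → ℝ≥0∞, IsLscFun sm g' ∧ (∀ x, f x ≤ g' x) ∧ TriRel g' g) →
        closure {x : C | 1 < f x} ⊆ {x : C | 1 < g x}) ∧
      ((closure {x : C | 1 < f x} ⊆ {x : C | 1 < g x}) →
        ∀ (ι : Type v) [Preorder ι] [Nonempty ι],
          (∀ a b : ι, ∃ c : ι, a ≤ c ∧ b ≤ c) →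
          ∀ h : ι → C → ℝ≥0∞, (∀ i, IsLscFun sm (h i)) →
            (∀ i i' : ι, i ≤ i' → ∀ x, h i x ≤ h i' x) →
            (∀ x, g x ≤ ⨆ i, h i x) → ∃ i, ∀ x, f x ≤ h i x) ∧
      ((∀ (ι : Type v) [Preorder ι] [Nonempty ι],
          (∀ a b : ι, ∃ c : ι, a ≤ c ∧ b ≤ c) →
          ∀ h : ι → C → ℝ≥0∞, (∀ i, IsLscFun sm (h i)) →
            (∀ i i' : ι, i ≤ i' → ∀ x, h i x ≤ h i' x) →
            (∀ x, g x ≤ ⨆ i, h i x) → ∃ i, ∀ x, f x ≤ h i x) →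
        ∀ h : ℕ → C → ℝ≥0∞, (∀ n, IsLscFun sm (h n)) →
          (∀ n n' : ℕ, n ≤ n' → ∀ x, h n x ≤ h n' x) →
          (∀ x, g x ≤ ⨆ n, h n x) → ∃ n, ∀ x, f x ≤ h n x)) ∧
    (MemLL sm g →
      ((∀ h : ℕ → C → ℝ≥0∞, (∀ n, IsLscFun sm (h n)) →
          (∀ n n' : ℕ, n ≤ n' → ∀ x, h n x ≤ h n' x) →
          (∀ x, g x ≤ ⨆ n, h n x) → ∃ n, ∀ x, f x ≤ h n x) →
        ∃ g' : C → ℝ≥0∞, IsLscFun sm g' ∧ (∀ x, f x ≤ g' x) ∧ TriRel g' g)) := by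

  classical
  refine ⟨⟨?_, ?_, ?_⟩, ?_⟩
  · -- (i) → (ii)
    rintro ⟨g', hg', hfg', ε, hε, hle, hcont⟩ x hx
    by_contra hgx
    have hgx1 : g x ≤ 1 := not_lt.mp hgx
    have hgfin : g x < ⊤ := lt_of_le_of_lt hgx1 (by simp)
    have hc : ContinuousAt g' x := hcont x hgfin
    have hg'x : g' x < 1 := by
      calc g' x ≤ ENNReal.ofReal (1 - ε) * g x := hle x
        _ ≤ ENNReal.ofReal (1 - ε) * 1 := by gcongr
        _ = ENNReal.ofReal (1 - ε) := mul_one _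
        _ < 1 := ENNReal.ofReal_lt_one.mpr (by linarith)
    have hnb : {y : C | g' y < 1} ∈ nhds x := hc.preimage_mem_nhds (Iio_mem_nhds hg'x)
    obtain ⟨y, hy1, hy2⟩ := mem_closure_iff_nhds.mp hx _ hnb
    exact absurd (lt_of_lt_of_le hy2 (hfg' y)) (not_lt.mpr hy1.le)
  · -- (ii) → (iii)
    intro hcl ι _ _ hdir h hlsc hmono hsup
    haveI : IsDirected ι (· ≤ ·) := ⟨hdir⟩
    set K := closure {x : C | 1 < f x} with hK
    have hKc : IsCompact K := isClosed_closure.isCompact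
    have hopen : ∀ i, IsOpen ((h i) ⁻¹' Set.Ioi 1) := fun i =>
      (lowerSemicontinuous_iff_isOpen_preimage.mp (hlsc i).lsc) 1
    have hcover : K ⊆ ⋃ i, (h i) ⁻¹' Set.Ioi 1 := by
      intro x hxK
      have h1 : (1 : ℝ≥0∞) < ⨆ i, h i x := lt_of_lt_of_le (hcl hxK) (hsup x)
      obtain ⟨i, hi⟩ := lt_iSup_iff.mp h1
      exact Set.mem_iUnion.mpr ⟨i, hi⟩
    obtain ⟨t, ht⟩ := hKc.elim_finite_subcover _ hopen hcover
    obtain ⟨M, hM⟩ := t.exists_le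
    have hKM : ∀ x ∈ K, 1 < h M x := by
      intro x hxK
      obtain ⟨i, hit, hix⟩ := Set.mem_iUnion₂.mp (ht hxK)
      exact lt_of_lt_of_le hix (hmono i M (hM i hit) x)
    refine ⟨M, fun x => ?_⟩
    by_contra hlt
    push_neg at hlt
    obtain ⟨c, hc1, hc2⟩ := exists_between hlt
    have hc0 : (0 : ℝ≥0∞) < c := lt_of_le_of_lt zero_le hc1
    have hcT : c ≠ ⊤ := ne_top_of_lt hc2
    set s := c.toReal with hsdef
    have hs : 0 < s := ENNReal.toReal_pos hc0.ne' hcT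
    have hcs : ENNReal.ofReal s = c := ENNReal.ofReal_toReal hcT
    have hs1 : 0 < 1 / s := by positivity
    have hoT : ENNReal.ofReal (1/s) ≠ ⊤ := ENNReal.ofReal_ne_top
    have ho0 : ENNReal.ofReal (1/s) ≠ 0 := (ENNReal.ofReal_pos.mpr hs1).ne'
    have hmul : ENNReal.ofReal (1/s) * c = 1 := by
      rw [← hcs, ← ENNReal.ofReal_mul hs1.le, one_div_mul_cancel hs.ne', ENNReal.ofReal_one]
    have hfy : (1 : ℝ≥0∞) < f (sm (1/s) x) := by
      rw [hf.map_smul (1/s) hs1 x, ← hmul]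
      exact (ENNReal.mul_lt_mul_iff_right ho0 hoT).mpr hc2
    have hyK : sm (1/s) x ∈ K := subset_closure hfy
    have hhy : 1 < h M (sm (1/s) x) := hKM _ hyK
    have hxeq : sm s (sm (1/s) x) = x := by
      rw [← hC.mul_smul s (1/s) hs hs1 x, mul_one_div_cancel hs.ne', hC.one_smul]
    have : c < h M x := by
      calc c = ENNReal.ofReal s * 1 := by rw [mul_one, hcs]
        _ < ENNReal.ofReal s * h M (sm (1/s) x) := by
            exact (ENNReal.mul_lt_mul_iff_right (ENNReal.ofReal_pos.mpr hs).ne'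
              ENNReal.ofReal_ne_top).mpr hhy
        _ = h M (sm s (sm (1/s) x)) := ((hlsc M).map_smul s hs _).symm
        _ = h M x := by rw [hxeq]
    exact absurd hc1 (not_lt.mpr this.le)
  · -- (iii) → (iv)
    intro hiii h hlsc hmono hsup
    haveI : Nonempty (ULift.{v} ℕ) := ⟨⟨0⟩⟩
    obtain ⟨i, hi⟩ := hiii (ULift.{v} ℕ)
      (fun a b => ⟨⟨max a.down b.down⟩, le_max_left _ _, le_max_right _ _⟩)
      (fun i => h i.down) (fun i => hlsc i.down)
      (fun i i' hii' => hmono i.down i'.down hii')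
      (fun x => le_trans (hsup x) (iSup_le fun n => le_iSup_of_le ⟨n⟩ le_rfl))
    exact ⟨i.down, hi⟩
  · -- (iv) → (i) given MemLL
    rintro ⟨G, hG, hGtri, hGsup⟩ hiv
    have hGmono : ∀ n n', n ≤ n' → ∀ x, G n x ≤ G n' x := by
      intro n n' hnn'
      induction hnn' with
      | refl => exact fun x => le_rfl
      | @step k hk ih =>
        intro x
        obtain ⟨ε, hε, hle, -⟩ := hGtri k
        calc G n x ≤ G k x := ih x
          _ ≤ ENNReal.ofReal (1 - ε) * G (k+1) x := hle x
          _ ≤ 1 * G (k+1) x := by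
              gcongr
              exact (ENNReal.ofReal_lt_one.mpr (by linarith)).le
          _ = G (k+1) x := one_mul _
    obtain ⟨n, hn⟩ := hiv G hG hGmono (fun x => (hGsup x).le)
    obtain ⟨ε, hε, hle, hcont⟩ := hGtri n
    have hG1g : ∀ x, G (n+1) x ≤ g x := fun x => by
      rw [hGsup x]; exact le_iSup (fun k => G k x) (n+1)
    refine ⟨G n, hG n, hn, ε, hε, fun x => ?_, fun x hx => ?_⟩
    · exact (hle x).trans (by gcongr; exact hG1g x)
    · exact hcont x (lt_of_le_of_lt (hG1g x) hx)
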